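/- (Generalized Dwass formula.) Let π be a probability law on Z+×Z+ giving the number of clone and mutant children, with E[ξc] ≤ 1. For a Galton-Watson process with sterile mutants started from a ≥ 1 ancestors, the joint law of the total clone population T0 and the number of mutants M1 is P_a(T0 = n, M1 = ℓ) = (a/n)·π^{*n}_{n-a, ℓ} for all n ≥ a ≥ 1 and ℓ ≥ 0, where π^{*n} is the n-fold convolution power of π. -/

import Mathlib

open scoped ENNReal
open MeasureTheory ProbabilityTheory

/-- `n`-fold convolution power of a law on `ℕ × ℕ` (law of the sum of `n` i.i.d. copies). -/
noncomputable def convPow (π : PMF (ℕ × ℕ)) : ℕ → PMF (ℕ × ℕ)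
  | 0 => PMF.pure (0, 0)
  | n + 1 => (convPow π n).bind fun s => π.map fun t => (s.1 + t.1, s.2 + t.2)

/-- `μ` is the joint law of `(T0, M1)` for the Galton-Watson process with sterile mutants,
one ancestor and offspring law `π`; under `a` ancestors the law of `(T0, M1)` is `convPow μ a`. -/
def branchingFixedPoint (π μ : PMF (ℕ × ℕ)) : Prop :=
  μ = π.bind fun kl => (convPow μ kl.1).map fun s => (1 + s.1, kl.2 + s.2)

namespace DwassAux

noncomputable def mconv (F G : PMF (ℕ × ℕ)) : PMF (ℕ × ℕ) :=
  F.bind fun s => G.map (s + ·)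

lemma convPow_succ (ρ : PMF (ℕ × ℕ)) (n : ℕ) :
    convPow ρ (n + 1) = mconv (convPow ρ n) ρ := rfl

lemma mconv_def' (F G : PMF (ℕ × ℕ)) :
    mconv F G = F.bind fun s => G.bind fun t => PMF.pure (s + t) := rfl

lemma mconv_comm (F G : PMF (ℕ × ℕ)) : mconv F G = mconv G F := by
  rw [mconv_def', mconv_def', PMF.bind_comm]
  simp_rw [add_comm]

lemma mconv_assoc (F G H : PMF (ℕ × ℕ)) :
    mconv (mconv F G) H = mconv F (mconv G H) := by
  simp only [mconv_def', PMF.bind_bind, PMF.pure_bind]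
  simp_rw [add_assoc]

lemma mconv_pure_left (G : PMF (ℕ × ℕ)) : mconv (PMF.pure (0, 0)) G = G := by
  rw [mconv_def', PMF.pure_bind]
  simp_rw [show ((0,0) : ℕ × ℕ) = 0 from rfl, zero_add]
  exact PMF.bind_pure G

lemma mconv_pure_right (F : PMF (ℕ × ℕ)) : mconv F (PMF.pure (0, 0)) = F := by
  rw [mconv_comm]; exact mconv_pure_left F

lemma convPow_add (ρ : PMF (ℕ × ℕ)) (a b : ℕ) :
    convPow ρ (a + b) = mconv (convPow ρ a) (convPow ρ b) := by
  induction b with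
  | zero => simpa [convPow] using (mconv_pure_right (convPow ρ a)).symm
  | succ b ih =>
      rw [show a + (b + 1) = (a + b) + 1 from rfl, convPow_succ, ih, mconv_assoc,
        ← convPow_succ]

lemma convPow_one (ρ : PMF (ℕ × ℕ)) : convPow ρ 1 = ρ := by
  rw [show (1 : ℕ) = 0 + 1 from rfl, convPow_succ]
  simpa [convPow] using mconv_pure_left ρ

end DwassAux

namespace DwassAux
open scoped Classical

lemma coll (F : ℕ × ℕ → ℝ≥0∞) (t p : ℕ × ℕ) {D : (s : ℕ × ℕ) → Decidable (p = t + s)} :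
    (∑' s : ℕ × ℕ, @ite _ (p = t + s) (D s) (F s) 0)
      = if t.1 ≤ p.1 ∧ t.2 ≤ p.2 then F (p.1 - t.1, p.2 - t.2) else 0 := by
  split_ifs with h
  · rw [tsum_eq_single (p.1 - t.1, p.2 - t.2)]
    · rw [if_pos]
      obtain ⟨p1, p2⟩ := p; obtain ⟨t1, t2⟩ := t
      simp only [Prod.mk_add_mk, Prod.mk.injEq] at *
      omega
    · intro b hb
      rw [if_neg]
      intro hc
      apply hb
      obtain ⟨p1, p2⟩ := p; obtain ⟨t1, t2⟩ := t; obtain ⟨b1, b2⟩ := b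
      simp only [Prod.mk_add_mk, Prod.mk.injEq] at *
      omega
  · convert tsum_zero with s
    rw [if_neg]
    intro hc
    apply h
    obtain ⟨p1, p2⟩ := p; obtain ⟨t1, t2⟩ := t; obtain ⟨s1, s2⟩ := s
    simp only [Prod.mk_add_mk, Prod.mk.injEq] at *
    omega

lemma mconv_apply (F G : PMF (ℕ × ℕ)) (p : ℕ × ℕ) :
    mconv F G p
      = ∑' t : ℕ × ℕ, F t *
          (if t.1 ≤ p.1 ∧ t.2 ≤ p.2 then G (p.1 - t.1, p.2 - t.2) else 0) := by
  simp only [mconv, PMF.bind_apply, PMF.map_apply]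
  exact tsum_congr fun t => congrArg (fun z => F t * z) (coll G t p)

lemma convPow_zero_apply (ρ : PMF (ℕ × ℕ)) (p : ℕ × ℕ) :
    convPow ρ 0 p = if p = (0, 0) then 1 else 0 := by
  rw [show convPow ρ 0 = PMF.pure (0, 0) from rfl, PMF.pure_apply]
  split_ifs <;> rfl

lemma gg_succ_apply (π : PMF (ℕ × ℕ)) (n : ℕ) (p : ℕ × ℕ) :
    convPow π (n + 1) p
      = ∑' kl : ℕ × ℕ, π kl *
          (if kl.1 ≤ p.1 ∧ kl.2 ≤ p.2 then convPow π n (p.1 - kl.1, p.2 - kl.2) else 0) := by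
  rw [convPow_succ, mconv_comm, mconv_apply]

end DwassAux

namespace DwassAux

lemma fa_succ (π μ : PMF (ℕ × ℕ)) (hb : branchingFixedPoint π μ) (a : ℕ) :
    convPow μ (a + 1) = π.bind fun kl =>
      (convPow μ (kl.1 + a)).map (fun s => ((1 : ℕ), kl.2) + s) := by
  have h1 : convPow μ (a + 1) = mconv μ (convPow μ a) := by
    rw [convPow_succ, mconv_comm]
  rw [branchingFixedPoint] at hb
  rw [h1]
  nth_rewrite 1 [hb]
  simp only [mconv, PMF.map, convPow_add, PMF.bind_bind, PMF.pure_bind, Function.comp_def]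
  congr 1; funext kl; congr 1; funext s; congr 1; funext u
  congr 1
  show ((1 : ℕ) + s.1, kl.2 + s.2) + u = ((1 : ℕ), kl.2) + (s + u)
  obtain ⟨s1, s2⟩ := s; obtain ⟨u1, u2⟩ := u
  simp [Prod.mk_add_mk]; omega

lemma fa_succ_apply (π μ : PMF (ℕ × ℕ)) (hb : branchingFixedPoint π μ) (a n ℓ : ℕ) :
    convPow μ (a + 1) (n + 1, ℓ)
      = ∑' kl : ℕ × ℕ, π kl *
          (if kl.2 ≤ ℓ then convPow μ (kl.1 + a) (n, ℓ - kl.2) else 0) := by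
  rw [fa_succ π μ hb a, PMF.bind_apply]
  refine tsum_congr fun kl => ?_
  rw [PMF.map_apply]
  refine congrArg (fun z => π kl * z) ?_
  refine (coll (convPow μ (kl.1 + a)) ((1 : ℕ), kl.2) (n + 1, ℓ)).trans ?_
  simp

lemma mu_zero (π μ : PMF (ℕ × ℕ)) (hb : branchingFixedPoint π μ) (ℓ : ℕ) :
    μ (0, ℓ) = 0 := by
  rw [branchingFixedPoint] at hb
  rw [hb, PMF.bind_apply]
  refine (tsum_congr fun kl => ?_).trans tsum_zero
  rw [PMF.map_apply]
  refine (congrArg (fun z => π kl * z) ((tsum_congr fun s => ?_).trans tsum_zero)).trans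
    (mul_zero _)
  rw [if_neg]
  intro hc
  have := congrArg Prod.fst hc
  omega

lemma fa_big_zero (π μ : PMF (ℕ × ℕ)) (hb : branchingFixedPoint π μ) :
    ∀ b (p : ℕ × ℕ), p.1 < b → convPow μ b p = 0 := by
  intro b
  induction b with
  | zero => intro p h; omega
  | succ b ih =>
      intro p h
      rw [convPow_succ, mconv_apply, ENNReal.tsum_eq_zero]
      intro t
      by_cases h1 : t.1 < b
      · rw [ih t h1, zero_mul]
      · split_ifs with h2
        · rw [show (p.1 - t.1, p.2 - t.2) = (0, p.2 - t.2) from by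
            rw [Prod.mk.injEq]; omega,
            mu_zero π μ hb, mul_zero]
        · rw [mul_zero]

end DwassAux

namespace DwassAux

/-- The `ξc`-weighted first-step sum. -/
noncomputable def Sw (π : PMF (ℕ × ℕ)) (n m ℓ : ℕ) : ℝ≥0∞ :=
  ∑' kl : ℕ × ℕ, if kl.1 ≤ m ∧ kl.2 ≤ ℓ then
    (kl.1 : ℝ≥0∞) * π kl * convPow π n (m - kl.1, ℓ - kl.2) else 0

lemma swap_lemma (π : PMF (ℕ × ℕ)) (n m ℓ : ℕ) :
    (∑' kl : ℕ × ℕ, if kl.1 ≤ m ∧ kl.2 ≤ ℓ then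
        π kl * Sw π n (m - kl.1) (ℓ - kl.2) else 0)
      = Sw π (n + 1) m ℓ := by
  have h1 : ∀ kl : ℕ × ℕ,
      (if kl.1 ≤ m ∧ kl.2 ≤ ℓ then π kl * Sw π n (m - kl.1) (ℓ - kl.2) else 0)
        = ∑' uv : ℕ × ℕ, (if kl.1 + uv.1 ≤ m ∧ kl.2 + uv.2 ≤ ℓ then
            (uv.1 : ℝ≥0∞) * (π kl * π uv)
              * convPow π n (m - kl.1 - uv.1, ℓ - kl.2 - uv.2) else 0) := by
    intro kl
    split_ifs with h
    · rw [Sw, ← ENNReal.tsum_mul_left]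
      refine tsum_congr fun uv => ?_
      split_ifs with h2 h3 h3
      · ring
      · omega
      · omega
      · simp
    · refine ((tsum_congr fun uv => if_neg (by omega)).trans tsum_zero).symm
  have h2 : ∀ uv : ℕ × ℕ,
      (if uv.1 ≤ m ∧ uv.2 ≤ ℓ then
          (uv.1 : ℝ≥0∞) * π uv * convPow π (n + 1) (m - uv.1, ℓ - uv.2) else 0)
        = ∑' kl : ℕ × ℕ, (if kl.1 + uv.1 ≤ m ∧ kl.2 + uv.2 ≤ ℓ then
            (uv.1 : ℝ≥0∞) * (π kl * π uv)
              * convPow π n (m - kl.1 - uv.1, ℓ - kl.2 - uv.2) else 0) := by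
    intro uv
    split_ifs with h
    · rw [gg_succ_apply π n (m - uv.1, ℓ - uv.2), ← ENNReal.tsum_mul_left]
      refine tsum_congr fun kl => ?_
      dsimp only
      split_ifs with h2 h3 h3
      · have e1 : m - uv.1 - kl.1 = m - kl.1 - uv.1 := by omega
        have e2 : ℓ - uv.2 - kl.2 = ℓ - kl.2 - uv.2 := by omega
        rw [e1, e2]; ring
      · omega
      · omega
      · simp
    · refine ((tsum_congr fun kl => if_neg (by omega)).trans tsum_zero).symm
  calc (∑' kl : ℕ × ℕ, if kl.1 ≤ m ∧ kl.2 ≤ ℓ then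
        π kl * Sw π n (m - kl.1) (ℓ - kl.2) else 0)
      = ∑' kl : ℕ × ℕ, ∑' uv : ℕ × ℕ, (if kl.1 + uv.1 ≤ m ∧ kl.2 + uv.2 ≤ ℓ then
            (uv.1 : ℝ≥0∞) * (π kl * π uv)
              * convPow π n (m - kl.1 - uv.1, ℓ - kl.2 - uv.2) else 0) := tsum_congr h1
    _ = ∑' uv : ℕ × ℕ, ∑' kl : ℕ × ℕ, (if kl.1 + uv.1 ≤ m ∧ kl.2 + uv.2 ≤ ℓ then
            (uv.1 : ℝ≥0∞) * (π kl * π uv)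
              * convPow π n (m - kl.1 - uv.1, ℓ - kl.2 - uv.2) else 0) := ENNReal.tsum_comm
    _ = Sw π (n + 1) m ℓ := (tsum_congr h2).symm

end DwassAux

namespace DwassAux

lemma Eweighted (π : PMF (ℕ × ℕ)) :
    ∀ n m ℓ : ℕ, ((n : ℝ≥0∞) + 1) * Sw π n m ℓ
      = (m : ℝ≥0∞) * convPow π (n + 1) (m, ℓ) := by
  intro n
  induction n with
  | zero =>
      intro m ℓ
      rw [convPow_one, Sw]
      rw [tsum_eq_single ((m, ℓ) : ℕ × ℕ)]
      · rw [if_pos ⟨le_refl _, le_refl _⟩]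
        simp only [Nat.sub_self, convPow_zero_apply, if_pos rfl]
        simp
      · intro b hb
        split_ifs with h
        · rw [convPow_zero_apply, if_neg, mul_zero]
          intro hc
          apply hb
          obtain ⟨b1, b2⟩ := b
          simp only [Prod.mk.injEq] at *
          omega
        · rfl
  | succ n ih =>
      intro m ℓ
      have key : (m : ℝ≥0∞) * convPow π (n + 1 + 1) (m, ℓ)
          = Sw π (n + 1) m ℓ + ((n : ℝ≥0∞) + 1) *
              (∑' kl : ℕ × ℕ, if kl.1 ≤ m ∧ kl.2 ≤ ℓ then
                π kl * Sw π n (m - kl.1) (ℓ - kl.2) else 0) := by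
        rw [gg_succ_apply π (n + 1) (m, ℓ), ← ENNReal.tsum_mul_left]
        have hpt : ∀ kl : ℕ × ℕ,
            (m : ℝ≥0∞) * (π kl * (if kl.1 ≤ (m, ℓ).1 ∧ kl.2 ≤ (m, ℓ).2 then
                convPow π (n + 1) ((m, ℓ).1 - kl.1, (m, ℓ).2 - kl.2) else 0))
              = (if kl.1 ≤ m ∧ kl.2 ≤ ℓ then
                  (kl.1 : ℝ≥0∞) * π kl * convPow π (n + 1) (m - kl.1, ℓ - kl.2) else 0)
                + (if kl.1 ≤ m ∧ kl.2 ≤ ℓ then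
                    ((n : ℝ≥0∞) + 1) * (π kl * Sw π n (m - kl.1) (ℓ - kl.2)) else 0) := by
          intro kl
          dsimp only
          split_ifs with h
          · have hm : (kl.1 : ℝ≥0∞) + ((m - kl.1 : ℕ) : ℝ≥0∞) = (m : ℝ≥0∞) := by
              rw [← Nat.cast_add]
              exact congrArg _ (Nat.add_sub_cancel' h.1)
            have hih := ih (m - kl.1) (ℓ - kl.2)
            calc (m : ℝ≥0∞) * (π kl * convPow π (n + 1) (m - kl.1, ℓ - kl.2))
                = (kl.1 : ℝ≥0∞) * π kl * convPow π (n + 1) (m - kl.1, ℓ - kl.2)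
                  + π kl * (((m - kl.1 : ℕ) : ℝ≥0∞)
                      * convPow π (n + 1) (m - kl.1, ℓ - kl.2)) := by
                  rw [← hm]; ring
              _ = _ := by rw [← hih]; ring
          · simp
        rw [tsum_congr hpt, ENNReal.tsum_add]
        refine congrArg₂ (· + ·) rfl ?_
        rw [← ENNReal.tsum_mul_left]
        exact tsum_congr fun kl => by split_ifs <;> simp
      have hswap := swap_lemma π n m ℓ
      rw [hswap] at key
      rw [key]
      push_cast
      ring
end DwassAux

namespace DwassAux

lemma main (π μ : PMF (ℕ × ℕ)) (hb : branchingFixedPoint π μ) :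
    ∀ n c ℓ : ℕ, convPow μ c (n + 1, ℓ)
      = if c ≤ n + 1 then
          ((c : ℝ≥0∞) / ((n : ℝ≥0∞) + 1)) * convPow π (n + 1) (n + 1 - c, ℓ)
        else 0 := by
  intro n
  induction n with
  | zero =>
      intro c ℓ
      match c with
      | 0 =>
          rw [convPow_zero_apply, if_neg (by simp), if_pos (by omega)]
          simp
      | 1 =>
          rw [fa_succ_apply π μ hb 0 0 ℓ, if_pos le_rfl, convPow_one]
          rw [tsum_eq_single ((0, ℓ) : ℕ × ℕ)]
          · rw [if_pos le_rfl]
            simp only [Nat.sub_self, add_zero, convPow_zero_apply, if_pos rfl]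
            norm_num
          · intro b hbne
            by_cases h1 : 1 ≤ b.1 + 0
            · rw [fa_big_zero π μ hb (b.1 + 0) (0, ℓ - b.2) (by show 0 < b.1 + 0; omega)]
              split_ifs <;> simp
            · rw [show b.1 + 0 = 0 from by omega]
              split_ifs with h2
              · rw [convPow_zero_apply, if_neg, mul_zero]
                intro hc
                apply hbne
                obtain ⟨b1, b2⟩ := b
                simp only [Prod.mk.injEq] at *
                omega
              · rw [mul_zero]
      | (b + 2) =>
          rw [fa_succ_apply π μ hb (b + 1) 0 ℓ, if_neg (by omega)]
          refine (tsum_congr fun kl => ?_).trans tsum_zero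
          rw [fa_big_zero π μ hb (kl.1 + (b + 1)) (0, ℓ - kl.2) (by simp)]
          split_ifs <;> simp
  | succ n ih =>
      intro c ℓ
      match c with
      | 0 =>
          rw [convPow_zero_apply, if_neg (by simp), if_pos (by omega)]
          simp
      | (b + 1) =>
          rw [fa_succ_apply π μ hb b (n + 1) ℓ]
          have hterm : ∀ kl : ℕ × ℕ,
              π kl * (if kl.2 ≤ ℓ then convPow μ (kl.1 + b) (n + 1, ℓ - kl.2) else 0)
                = π kl * (if kl.2 ≤ ℓ then
                    (if kl.1 + b ≤ n + 1 then
                      (((kl.1 + b : ℕ) : ℝ≥0∞) / ((n : ℝ≥0∞) + 1))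
                        * convPow π (n + 1) (n + 1 - (kl.1 + b), ℓ - kl.2)
                    else 0) else 0) := by
            intro kl
            split_ifs with h1
            · rw [ih (kl.1 + b) (ℓ - kl.2), if_pos ‹_›]
            · rw [ih (kl.1 + b) (ℓ - kl.2), if_neg ‹_›]
            · rfl
          rw [tsum_congr hterm]
          by_cases hble : b ≤ n + 1
          · -- main case
            set m := n + 1 - b with hm
            have hmb : m + b = n + 1 := by omega
            set ν : ℝ≥0∞ := (n : ℝ≥0∞) + 1 with hν
            set N : ℝ≥0∞ := (n : ℝ≥0∞) + 2 with hN
            have hν0 : ν ≠ 0 := by simp [hν]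
            have hνt : ν ≠ ∞ := by simp [hν]
            have hN0 : N ≠ 0 := by simp [hN]
            have hNt : N ≠ ∞ := by simp [hN]
            set S : ℝ≥0∞ := ∑' kl : ℕ × ℕ, π kl * (if kl.2 ≤ ℓ then
                    (if kl.1 + b ≤ n + 1 then
                      (((kl.1 + b : ℕ) : ℝ≥0∞) / ν)
                        * convPow π (n + 1) (n + 1 - (kl.1 + b), ℓ - kl.2)
                    else 0) else 0) with hS
            have hA : ν * S = Sw π (n + 1) m ℓ
                + (b : ℝ≥0∞) * convPow π (n + 2) (m, ℓ) := by
              rw [hS, ← ENNReal.tsum_mul_left]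
              have hpt : ∀ kl : ℕ × ℕ,
                  ν * (π kl * (if kl.2 ≤ ℓ then
                    (if kl.1 + b ≤ n + 1 then
                      (((kl.1 + b : ℕ) : ℝ≥0∞) / ν)
                        * convPow π (n + 1) (n + 1 - (kl.1 + b), ℓ - kl.2)
                    else 0) else 0))
                  = (if kl.1 ≤ m ∧ kl.2 ≤ ℓ then
                      (kl.1 : ℝ≥0∞) * π kl * convPow π (n + 1) (m - kl.1, ℓ - kl.2) else 0)
                    + (if kl.1 ≤ m ∧ kl.2 ≤ ℓ then
                        (b : ℝ≥0∞) * (π kl * convPow π (n + 1) (m - kl.1, ℓ - kl.2)) else 0) := by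
                intro kl
                by_cases h1 : kl.2 ≤ ℓ
                swap
                · rw [if_neg h1, if_neg (fun hc => h1 hc.2), if_neg (fun hc => h1 hc.2)]
                  simp
                by_cases h2 : kl.1 + b ≤ n + 1
                swap
                · rw [if_pos h1, if_neg h2, if_neg (fun hc => h2 (by omega)),
                    if_neg (fun hc => h2 (by omega))]
                  simp
                rw [if_pos h1, if_pos h2, if_pos ⟨by omega, h1⟩, if_pos ⟨by omega, h1⟩]
                · have he : n + 1 - (kl.1 + b) = m - kl.1 := by omega
                  rw [he]
                  have hcast : ((kl.1 + b : ℕ) : ℝ≥0∞) = (kl.1 : ℝ≥0∞) + (b : ℝ≥0∞) := by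
                    push_cast; ring
                  have hcan : ν * (((kl.1 + b : ℕ) : ℝ≥0∞) / ν)
                      = ((kl.1 + b : ℕ) : ℝ≥0∞) := ENNReal.mul_div_cancel hν0 hνt
                  calc ν * (π kl * ((((kl.1 + b : ℕ) : ℝ≥0∞) / ν)
                          * convPow π (n + 1) (m - kl.1, ℓ - kl.2)))
                      = (ν * (((kl.1 + b : ℕ) : ℝ≥0∞) / ν))
                          * (π kl * convPow π (n + 1) (m - kl.1, ℓ - kl.2)) := by ring
                    _ = _ := by rw [hcan, hcast]; ring
              rw [tsum_congr hpt, ENNReal.tsum_add]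
              refine congrArg₂ (· + ·) rfl ?_
              rw [gg_succ_apply π (n + 1) (m, ℓ), ← ENNReal.tsum_mul_left]
              refine tsum_congr fun kl => ?_
              dsimp only
              split_ifs <;> simp
            have hE := Eweighted π (n + 1) m ℓ
            have hE' : N * Sw π (n + 1) m ℓ = (m : ℝ≥0∞) * convPow π (n + 2) (m, ℓ) := by
              rw [hN]
              convert hE using 2
              push_cast
              ring
            have hmain : N * (ν * S) = ν * (((b : ℝ≥0∞) + 1) * convPow π (n + 2) (m, ℓ)) := by
              rw [hA, mul_add, hE']
              have hcoef : (m : ℝ≥0∞) + N * (b : ℝ≥0∞)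
                  = ν * ((b : ℝ≥0∞) + 1) := by
                have hnat : m + (n + 2) * b = (n + 1) * (b + 1) := by
                  have e1 : n + 2 = m + b + 1 := by omega
                  have e2 : n + 1 = m + b := by omega
                  rw [e1, e2]; ring
                have hcast := congrArg (fun k : ℕ => (k : ℝ≥0∞)) hnat
                push_cast at hcast
                rw [hν, hN]
                convert hcast using 1 <;> ring
              calc (m : ℝ≥0∞) * convPow π (n + 2) (m, ℓ)
                    + N * ((b : ℝ≥0∞) * convPow π (n + 2) (m, ℓ))
                  = ((m : ℝ≥0∞) + N * (b : ℝ≥0∞)) * convPow π (n + 2) (m, ℓ) := by ring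
                _ = _ := by rw [hcoef]; ring
            have hfin : S = (((b : ℝ≥0∞) + 1) / N) * convPow π (n + 2) (m, ℓ) := by
              have h2 : N * (ν * ((((b : ℝ≥0∞) + 1) / N) * convPow π (n + 2) (m, ℓ)))
                  = ν * (((b : ℝ≥0∞) + 1) * convPow π (n + 2) (m, ℓ)) := by
                calc N * (ν * ((((b : ℝ≥0∞) + 1) / N) * convPow π (n + 2) (m, ℓ)))
                    = ν * ((N * (((b : ℝ≥0∞) + 1) / N)) * convPow π (n + 2) (m, ℓ)) := by ring
                  _ = _ := by rw [ENNReal.mul_div_cancel hN0 hNt]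
              have := hmain.trans h2.symm
              have h3 := (ENNReal.mul_right_inj hN0 hNt).mp this
              exact (ENNReal.mul_right_inj hν0 hνt).mp h3
            rw [if_pos (by omega : b + 1 ≤ n + 1 + 1)]
            rw [hfin]
            have he2 : n + 1 + 1 - (b + 1) = m := by omega
            rw [he2]
            refine congrArg₂ (· * ·) ?_ rfl
            rw [hN]
            push_cast
            ring
          · -- b > n + 1 : both sides vanish
            rw [if_neg (by omega)]
            refine (tsum_congr fun kl => ?_).trans tsum_zero
            split_ifs with h1 h2
            · omega
            · simp
            · simp

end DwassAux

/-- generalized Dwass formula: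
`P_a(T0 = n, M1 = ℓ) = (a/n) · π^{*n}_{n-a, ℓ}` for `n ≥ a ≥ 1`, `ℓ ≥ 0`. -/
theorem stmt2 (π μ : PMF (ℕ × ℕ))
    (hb : branchingFixedPoint π μ)
    (hsub : ∑' kl : ℕ × ℕ, π kl * (kl.1 : ℝ≥0∞) ≤ 1) :
    ∀ a n ℓ : ℕ, 1 ≤ a → a ≤ n →
      (convPow μ a) (n, ℓ) = ((a : ℝ≥0∞) / (n : ℝ≥0∞)) * (convPow π n) (n - a, ℓ) := by
  intro a n ℓ ha han
  obtain ⟨k, rfl⟩ : ∃ k, n = k + 1 := ⟨n - 1, by omega⟩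
  rw [DwassAux.main π μ hb k a ℓ, if_pos han]
  refine congrArg₂ (· * ·) ?_ rfl
  push_cast
  ring
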